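/- For planar rooted trees T and T' and an ordered forest F of planar rooted trees, the coefficient of T' in the product B_+(F)∘T (asymmetric-shuffle/Grossman–Larson product of planar trees) equals the number of admissible cuts c of T' such that P^c(T') = F as an ordered forest and R^c(T') = T. Consequently the Hopf algebra (kP, ∘, Δ) is dual to the Foissy Hopf algebra H_F via the pairing (T,T') = δ_{T,T'}. -/

import Mathlib

/-! ### Planar rooted trees -/

/-- A planar rooted tree: a root with an ordered list of branches.
`PTree.node [T₁,…,T_k]` is `B₊(T₁⋯T_k)`; `PTree.node []` is the one-vertex tree `•`. -/
inductive PTree : Type where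
  | node : List PTree → PTree

instance : Inhabited PTree := ⟨.node []⟩

noncomputable instance : DecidableEq PTree := Classical.decEq _

/-! ### Dyck words and the shuffle product on planar rooted trees -/

namespace PTree

/-- The Dyck word (balanced bracket arrangement) of a planar rooted tree:
`word (B₊(T₁⋯T_k)) = ⟨w₁⟩⟨w₂⟩⋯⟨w_k⟩` where `wᵢ` is the word of `Tᵢ`
(with `true = ⟨` and `false = ⟩`). -/
def word : PTree → List Bool
  | .node l => (l.attach.map (fun x => true :: (word x.1 ++ [false]))).flatten
decreasing_by
  have h := List.sizeOf_lt_of_mem x.2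
  simp only [PTree.node.sizeOf_spec]
  omega

/-- The irreducible components `⟨w₁⟩,…,⟨w_k⟩` of the word of a planar rooted tree. -/
def blocks : PTree → List (List Bool)
  | .node l => l.map (fun t => true :: (word t ++ [false]))

end PTree

/-- All words obtained by shuffling the given blocks (kept atomic and in their
relative order) into the given word. -/
def shuffles : List (List Bool) → List Bool → List (List Bool)
  | [], w => [w]
  | b :: bs, [] => (shuffles bs []).map (b ++ ·)
  | b :: bs, x :: w =>
      ((shuffles bs (x :: w)).map (b ++ ·)) ++ ((shuffles (b :: bs) w).map (x :: ·))
termination_by bs w => bs.length + w.length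
decreasing_by all_goals simp +arith

/-- Stack-based parser turning a balanced word into the forest it represents. -/
def parseAux : List Bool → List (List PTree) → List PTree
  | [], stack => (stack.headD []).reverse
  | true :: w, stack => parseAux w ([] :: stack)
  | false :: w, stack =>
      match stack with
      | l :: l' :: rest => parseAux w ((PTree.node l.reverse :: l') :: rest)
      | _ => []

/-- The forest represented by a balanced word. -/
def parseForest (w : List Bool) : List PTree := parseAux w [[]]

/-- The planar rooted tree whose word is the given balanced word. -/
def parseTree (w : List Bool) : PTree := PTree.node (parseForest w)

/-- The product `∘` on `kP`: shuffle the irreducible components of the word of `T`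
into the word of `T'` (so `• ∘ T' = T'`). -/
noncomputable def pMul (k : Type*) [Semiring k] (T T' : PTree) : PTree →₀ k :=
  ((shuffles (PTree.blocks T) (PTree.word T')).map
    (fun w => Finsupp.single (parseTree w) (1 : k))).sum

/-- Bilinear extension of `∘` to `kP`. -/
noncomputable def pMulF {k : Type*} [CommSemiring k] (f g : PTree →₀ k) : PTree →₀ k :=
  f.sum (fun T a => g.sum (fun T' b => (a * b) • pMul k T T'))

/-! ### Cuts -/

/-- A decoration of (the edges of) a tree by Booleans: `true` means the edge
belongs to the cut. `Cut.node [(b₁,c₁),…,(b_k,c_k)]` matches a tree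
`PTree.node [t₁,…,t_k]`, with `bᵢ` decorating the edge from the root to `tᵢ`
and `cᵢ` a cut of `tᵢ`. -/
inductive Cut : Type where
  | node : List (Bool × Cut) → Cut

namespace Cut

mutual
/-- The number of edges in a cut. -/
def size : Cut → ℕ
  | .node l => sizeList l
/-- The number of edges in a list of decorated edges. -/
def sizeList : List (Bool × Cut) → ℕ
  | [] => 0
  | (b, c) :: cs => (if b then 1 else 0) + size c + sizeList cs
end

mutual
/-- The cut containing no edges. -/
def isEmpty : Cut → Bool
  | .node l => isEmptyList l
/-- Whether a list of decorated edges contains no cut edge. -/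
def isEmptyList : List (Bool × Cut) → Bool
  | [] => true
  | (b, c) :: cs => !b && isEmpty c && isEmptyList cs
end

mutual
/-- A cut is admissible if every path from the root to a leaf meets it at most
once, i.e. below a cut edge there is no further cut edge. -/
def admissible : Cut → Bool
  | .node l => admissibleList l
/-- Admissibility for a list of decorated edges. -/
def admissibleList : List (Bool × Cut) → Bool
  | [] => true
  | (b, c) :: cs => (if b then isEmpty c else admissible c) && admissibleList cs
end

end Cut

namespace PTree

mutual
/-- All cuts (edge subsets) of a planar rooted tree. -/
def cutsOf : PTree → List Cut
  | .node l => (cutsOfList l).map Cut.node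
/-- All decorations of a forest. -/
def cutsOfList : List PTree → List (List (Bool × Cut))
  | [] => [[]]
  | t :: ts =>
      (cutsOf t).flatMap (fun c =>
        (cutsOfList ts).flatMap (fun cs => [(true, c) :: cs, (false, c) :: cs]))
end

mutual
/-- `cutPieces t c = (R^c(t), P^c(t))`: the root component of `t` after removing
the edges of `c`, together with the ordered forest of the remaining components
(in planar depth-first order). -/
def cutPieces : PTree → Cut → PTree × List PTree
  | .node l, .node cs =>
      ((PTree.node (cutPiecesList l cs).1 : PTree), (cutPiecesList l cs).2)
/-- `cutPieces` for forests. -/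
def cutPiecesList : List PTree → List (Bool × Cut) → List PTree × List PTree
  | [], _ => ([], [])
  | _ :: _, [] => ([], [])
  | t :: ts, (b, c) :: cs =>
      let p := cutPieces t c
      let q := cutPiecesList ts cs
      if b then (q.1, (p.1 :: p.2) ++ q.2) else (p.1 :: q.1, p.2 ++ q.2)
end

/-- `R^c(T)`, the component containing the root. -/
def Rcut (t : PTree) (c : Cut) : PTree := (cutPieces t c).1

/-- `P^c(T)`, the ordered forest of components not containing the root. -/
def Pcut (t : PTree) (c : Cut) : List PTree := (cutPieces t c).2

end PTree

/-! ### Auxiliary development -/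

section Aux

open List

/-- The block word of a tree. -/
def blk (t : PTree) : List Bool := true :: (PTree.word t ++ [false])

/-- The word of a forest. -/
def wordF (F : List PTree) : List Bool := (F.map blk).flatten

lemma blocks_node (l : List PTree) : PTree.blocks (PTree.node l) = l.map blk := rfl

lemma word_node (l : List PTree) : PTree.word (PTree.node l) = wordF l := by
  rw [PTree.word, wordF]
  congr 1
  simp [blk]

lemma wordF_nil : wordF [] = [] := rfl

lemma wordF_cons (t : PTree) (ts : List PTree) :
    wordF (t :: ts) = true :: (PTree.word t ++ [false]) ++ wordF ts := rfl

/-- Balance of a word. -/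
def bal (w : List Bool) : ℤ := (w.count true : ℤ) - (w.count false : ℤ)

@[simp] lemma bal_nil : bal [] = 0 := rfl

@[simp] lemma bal_append (u v : List Bool) : bal (u ++ v) = bal u + bal v := by
  simp [bal, List.count_append]; ring

@[simp] lemma bal_cons (x : Bool) (w : List Bool) :
    bal (x :: w) = (if x then 1 else -1) + bal w := by
  cases x <;> simp [bal, List.count_cons] <;> ring

@[simp] lemma bal_true : bal [true] = 1 := rfl
@[simp] lemma bal_false : bal [false] = -1 := rfl

/-- All prefixes have nonnegative balance. -/
def Pos (w : List Bool) : Prop := ∀ p, p <+: w → 0 ≤ bal p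

/-- All prefixes have balance at least the total balance. -/
def Low (w : List Bool) : Prop := ∀ p, p <+: w → bal w ≤ bal p

lemma pos_nil : Pos [] := by intro p hp; simp [List.prefix_nil.1 hp]

lemma pos_append {u v : List Bool} (hu : Pos u) (hu0 : bal u = 0) (hv : Pos v) :
    Pos (u ++ v) := by
  intro p hp
  rcases hp with ⟨q, hq⟩
  rcases List.append_eq_append_iff.1 hq with ⟨a, ha, _⟩ | ⟨c, hc, hv'⟩
  · exact hu p ⟨a, ha.symm⟩
  · subst hc; simp [hu0]; exact hv c ⟨q, hv'.symm⟩

/-- Structural induction principle for forests of planar trees. -/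
theorem forest_ind {P : List PTree → Prop} (h0 : P [])
    (h1 : ∀ m ts, P m → P ts → P (PTree.node m :: ts)) : ∀ l, P l := by
  have key : ∀ n l, sizeOf l ≤ n → P l := by
    intro n
    induction n with
    | zero =>
      intro l hl
      cases l with
      | nil => exact h0
      | cons t ts =>
        exfalso
        have h1 : sizeOf (t :: ts) = 1 + sizeOf t + sizeOf ts := List.cons.sizeOf_spec t ts
        omega
    | succ n ih =>
      intro l hl
      cases l with
      | nil => exact h0
      | cons t ts =>
        cases t with
        | node m =>
          simp [List.cons.sizeOf_spec, PTree.node.sizeOf_spec] at hl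
          exact h1 m ts (ih m (by omega)) (ih ts (by omega))
  exact fun l => key (sizeOf l) l le_rfl

lemma prefix_append_cases {p q u v : List Bool} (h : p ++ q = u ++ v) :
    p <+: u ∨ ∃ c, p = u ++ c ∧ c <+: v := by
  rcases List.append_eq_append_iff.1 h with ⟨a, ha, _⟩ | ⟨c, hc, hv'⟩
  · exact Or.inl ⟨a, ha.symm⟩
  · exact Or.inr ⟨c, hc, ⟨q, hv'.symm⟩⟩

lemma pos_block {d : List Bool} (hd : Pos d) : Pos (true :: (d ++ [false])) := by
  intro p hp
  rcases List.prefix_cons_iff.1 hp with rfl | ⟨t, rfl, ht⟩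
  · simp
  · rcases ht with ⟨q, hq⟩
    rcases prefix_append_cases hq with h | ⟨c, rfl, hc⟩
    · have := hd t h
      simp; omega
    · have : bal c = 0 ∨ bal c = -1 := by
        rcases List.prefix_cons_iff.1 hc with rfl | ⟨t', rfl, ht'⟩
        · left; rfl
        · right; simp [List.prefix_nil.1 ht']
      have := hd d (List.prefix_refl d)
      simp; omega

@[simp] lemma bal_block (d : List Bool) : bal (true :: (d ++ [false])) = bal d := by
  simp

lemma pos_wordF_and_bal : ∀ l, Pos (wordF l) ∧ bal (wordF l) = 0 := by
  refine forest_ind ⟨pos_nil, rfl⟩ ?_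
  intro m ts ⟨hm, hm0⟩ ⟨hts, hts0⟩
  rw [wordF_cons, word_node]
  constructor
  · have h1 : Pos (true :: (wordF m ++ [false])) := pos_block hm
    have h2 : bal (true :: (wordF m ++ [false])) = 0 := by simp [hm0]
    simpa using pos_append h1 h2 hts
  · simp [hm0, hts0]

lemma pos_wordF (l : List PTree) : Pos (wordF l) := (pos_wordF_and_bal l).1

lemma bal_wordF (l : List PTree) : bal (wordF l) = 0 := (pos_wordF_and_bal l).2

lemma low_of_pos_bal {w : List Bool} (h : Pos w) (h0 : bal w = 0) : Low w := by
  intro p hp; rw [h0]; exact h p hp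

/-- A block: `⟨d⟩` for a Dyck word `d`. -/
def IsBlock (b : List Bool) : Prop :=
  ∃ d, Pos d ∧ bal d = 0 ∧ b = true :: (d ++ [false])

lemma isBlock_blk (t : PTree) : IsBlock (blk t) := by
  cases t with
  | node m =>
    exact ⟨wordF m, pos_wordF m, bal_wordF m, by rw [blk, word_node]⟩

lemma isBlock_pos {b : List Bool} (hb : IsBlock b) : Pos b := by
  obtain ⟨d, hd, hd0, rfl⟩ := hb; exact pos_block hd

lemma isBlock_bal {b : List Bool} (hb : IsBlock b) : bal b = 0 := by
  obtain ⟨d, hd, hd0, rfl⟩ := hb; simp [hd0]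

lemma isBlock_ne_nil {b : List Bool} (hb : IsBlock b) : b ≠ [] := by
  obtain ⟨d, hd, hd0, rfl⟩ := hb; simp

/-- Proper nonempty prefixes of a block have positive balance. -/
lemma isBlock_proper_prefix {b p : List Bool} (hb : IsBlock b) (hp : p <+: b)
    (hne : p ≠ []) (hpb : p ≠ b) : 1 ≤ bal p := by
  obtain ⟨d, hd, hd0, rfl⟩ := hb
  rcases List.prefix_cons_iff.1 hp with rfl | ⟨t, rfl, ht⟩
  · exact absurd rfl hne
  · rcases ht with ⟨q, hq⟩
    rcases prefix_append_cases hq with h | ⟨c, rfl, hc⟩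
    · have := hd t h; simp; omega
    · rcases List.prefix_cons_iff.1 hc with rfl | ⟨t', rfl, ht'⟩
      · simp [hd0]
      · simp [List.prefix_nil.1 ht'] at hpb

/-! ### Counting occurrences in shuffles -/

/-- Number of times `w` occurs in `shuffles bs v`. -/
def cnt (bs : List (List Bool)) (v w : List Bool) : ℕ := (shuffles bs v).count w

lemma count_map_append (L : List (List Bool)) (b w : List Bool) :
    (L.map (b ++ ·)).count w = if b <+: w then L.count (w.drop b.length) else 0 := by
  induction L with
  | nil => simp
  | cons a L ih =>
    by_cases hb : b <+: w
    · obtain ⟨t, rfl⟩ := hb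
      have hd : (b ++ t).drop b.length = t := by simp
      simp [List.count_cons, ih, hd, List.prefix_append]
    · have h1 : ¬ (b ++ a = w) := fun hh => hb ⟨a, hh⟩
      simp [List.count_cons, ih, hb, h1]

lemma count_map_cons (L : List (List Bool)) (x : Bool) (w : List Bool) :
    (L.map (x :: ·)).count w =
      if w.head? = some x then L.count w.tail else 0 := by
  have h := count_map_append L [x] w
  simp only [List.singleton_append] at h
  rw [h]
  cases w with
  | nil => simp
  | cons y w' =>
    by_cases hxy : y = x
    · subst hxy; simp [List.cons_prefix_cons]
    · simp [List.cons_prefix_cons, hxy, Ne.symm hxy]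

lemma cnt_nil (v w : List Bool) : cnt [] v w = if w = v then 1 else 0 := by
  rw [cnt, shuffles, List.count_singleton]
  simp only [beq_iff_eq]
  by_cases h : w = v
  · simp [h]
  · simp [h, Ne.symm h]

lemma cnt_blocks_nil (b : List Bool) (bs : List (List Bool)) (w : List Bool) :
    cnt (b :: bs) [] w = if b <+: w then cnt bs [] (w.drop b.length) else 0 := by
  rw [cnt, shuffles, count_map_append]; rfl

lemma cnt_cons (b : List Bool) (bs : List (List Bool)) (x : Bool) (v w : List Bool) :
    cnt (b :: bs) (x :: v) w =
      (if b <+: w then cnt bs (x :: v) (w.drop b.length) else 0)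
        + (if w.head? = some x then cnt (b :: bs) v w.tail else 0) := by
  rw [cnt, shuffles, List.count_append, count_map_append, count_map_cons]; rfl

lemma cnt_nil_target (b : List Bool) (bs : List (List Bool)) (v : List Bool)
    (hb : b ≠ []) : cnt (b :: bs) v [] = 0 := by
  rw [cnt, List.count_eq_zero]
  intro hmem
  cases v with
  | nil =>
    rw [shuffles] at hmem
    rcases List.mem_map.1 hmem with ⟨z, _, hz⟩
    exact hb (List.append_eq_nil_iff.1 hz).1
  | cons x v' =>
    rw [shuffles] at hmem
    rcases List.mem_append.1 hmem with h | h
    · rcases List.mem_map.1 h with ⟨z, _, hz⟩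
      exact hb (List.append_eq_nil_iff.1 hz).1
    · rcases List.mem_map.1 h with ⟨z, _, hz⟩
      simp at hz

/-! ### Prefix lemmas -/

lemma prefix_of_le_length {b u w₂ : List Bool} (h : b <+: u ++ w₂)
    (hle : b.length ≤ u.length) : b <+: u :=
  List.prefix_of_prefix_length_le h (List.prefix_append u w₂) hle

/-- A block is a prefix of `u ++ false :: w₂` iff it is a prefix of `u`,
provided `bal u ≤ 0`. -/
lemma block_prefix_iff {b u w₂ : List Bool} (hb : IsBlock b) (hu : bal u ≤ 0) :
    b <+: u ++ false :: w₂ ↔ b <+: u := by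
  constructor
  · intro h
    by_cases hle : b.length ≤ u.length
    · exact prefix_of_le_length (by simpa using h) hle
    · exfalso
      have h1 : u ++ [false] <+: u ++ false :: w₂ := by
        simp [List.prefix_append_right_inj]
      have hpre : u ++ [false] <+: b :=
        List.prefix_of_prefix_length_le h1 h (by simp; omega)
      have := isBlock_pos hb _ hpre
      simp at this
      omega
  · intro h
    exact h.trans (List.prefix_append _ _)

/-- Separator uniqueness. -/
lemma sep_unique {u s w₂ v₂ : List Bool} (hu : Low u) (hs : Low s)
    (hbal : bal u = bal s) (h : u ++ false :: w₂ = s ++ false :: v₂) :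
    u = s ∧ w₂ = v₂ := by
  have hlen : u.length = s.length := by
    by_contra hne
    rcases Nat.lt_or_ge u.length s.length with hlt | hge
    · have h1 : u ++ [false] <+: s ++ false :: v₂ := by
        rw [← h]; simp [List.prefix_append_right_inj]
      have h2 : s ++ [false] <+: s ++ false :: v₂ := by
        simp [List.prefix_append_right_inj]
      have hpre : u ++ [false] <+: s :=
        prefix_of_le_length (w₂ := false :: v₂) h1 (by simp; omega)
      have := hs _ hpre
      simp at this
      omega
    · have hlt : s.length < u.length := by omega
      have h1 : s ++ [false] <+: u ++ false :: w₂ := by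
        rw [h]; simp [List.prefix_append_right_inj]
      have hpre : s ++ [false] <+: u :=
        prefix_of_le_length (w₂ := false :: w₂) h1 (by simp; omega)
      have := hu _ hpre
      simp at this
      omega
  have := List.append_inj h hlen
  exact ⟨this.1, by simpa using this.2⟩

lemma low_nil : Low [] := by intro p hp; simp [List.prefix_nil.1 hp]

lemma low_cons {x : Bool} {w : List Bool} (h : Low (x :: w)) : Low w := by
  intro p hp
  have h2 := h (x :: p) (List.cons_prefix_cons.2 ⟨rfl, hp⟩)
  simp only [bal_cons] at h2
  omega

lemma low_drop {b u' : List Bool} (hb : bal b = 0) (h : Low (b ++ u')) : Low u' := by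
  intro p hp
  have h2 := h (b ++ p) ((List.prefix_append_right_inj b).2 hp)
  simpa [hb] using h2

lemma low_false_head {u₁ : List Bool} (h : Low (false :: u₁)) :
    bal (false :: u₁) ≤ -1 := by
  have := h [false] ⟨u₁, rfl⟩
  simpa using this

/-- The key splitting lemma for shuffle counts across a separator. -/
lemma split_main :
    ∀ n (bs : List (List Bool)) (s u v₂ w₂ : List Bool),
      bs.length + s.length ≤ n →
      (∀ b ∈ bs, IsBlock b) → Low s → Low u → bal s = bal u → bal u ≤ 0 →
      cnt bs (s ++ false :: v₂) (u ++ false :: w₂) =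
        ∑ i ∈ Finset.range (bs.length + 1),
          cnt (bs.take i) s u * cnt (bs.drop i) v₂ w₂ := by
  intro n
  induction n using Nat.strong_induction_on with
  | _ n IH =>
  intro bs s u v₂ w₂ hn hbs hs hu hbal hu0
  match bs, s with
  | [], s =>
    simp only [List.length_nil, zero_add, Finset.range_one, Finset.sum_singleton,
      List.take_nil, List.drop_nil]
    rw [cnt_nil, cnt_nil, cnt_nil]
    by_cases h : u ++ false :: w₂ = s ++ false :: v₂
    · obtain ⟨rfl, rfl⟩ := sep_unique hu hs hbal.symm h
      simp
    · rw [if_neg h]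
      by_cases h1 : u = s
      · subst h1
        by_cases h2 : w₂ = v₂
        · subst h2; exact absurd rfl h
        · simp [h2]
      · simp [h1]
  | b :: bs', [] =>
    have hb : IsBlock b := hbs b List.mem_cons_self
    have hbal0 : bal u = 0 := by simpa using hbal.symm
    have hn' : bs'.length + ([] : List Bool).length < n := by
      simp at hn ⊢; omega
    rw [List.nil_append, cnt_cons, Finset.sum_range_succ']
    simp only [List.take_succ_cons, List.drop_succ_cons, List.take_zero, List.drop_zero,
      List.length_cons]
    simp only [block_prefix_iff hb hu0]
    by_cases hbu : b <+: u
    · obtain ⟨u', rfl⟩ := hbu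
      have hbne : b ≠ [] := isBlock_ne_nil hb
      have hb0 : bal b = 0 := isBlock_bal hb
      have hdrop : ((b ++ u') ++ false :: w₂).drop b.length = u' ++ false :: w₂ := by
        rw [List.append_assoc, List.drop_left]
      have hhead : ((b ++ u') ++ false :: w₂).head? ≠ some false := by
        obtain ⟨d, _, _, rfl⟩ := hb; simp
      rw [if_pos (List.prefix_append b u'), hdrop, if_neg hhead]
      have hIH := IH _ hn' bs' [] u' v₂ w₂ le_rfl
        (fun x hx => hbs x (List.mem_cons_of_mem _ hx)) low_nil
        (low_drop hb0 hu) (by simpa [hb0] using hbal)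
        (by simp only [bal_append, hb0, zero_add] at hu0; exact hu0)
      rw [List.nil_append] at hIH
      rw [hIH]
      have hu'ne : (b ++ u') ≠ [] := by simp [hbne]
      rw [cnt_nil, if_neg hu'ne, zero_mul, add_zero, add_zero]
      apply Finset.sum_congr rfl
      intro j _
      rw [cnt_blocks_nil, if_pos (List.prefix_append b u'), List.drop_left]
    · rw [if_neg hbu, zero_add]
      match u, hu, hbal0 with
      | [], _, _ =>
        simp only [List.nil_append, List.head?_cons, List.tail_cons, if_pos rfl]
        rw [cnt_nil]
        simp only [if_pos rfl, one_mul]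
        have hz : ∀ j ∈ Finset.range (bs'.length + 1),
            cnt (b :: bs'.take j) [] [] * cnt (bs'.drop j) v₂ w₂ = 0 := by
          intro j _
          rw [cnt_blocks_nil]
          have : ¬ b <+: ([] : List Bool) := by
            intro hh; exact isBlock_ne_nil hb (List.prefix_nil.1 hh)
          rw [if_neg this, zero_mul]
        rw [Finset.sum_congr rfl hz]
        simp
      | true :: u₁, _, _ =>
        have h1 : ((true :: u₁) ++ false :: w₂).head? ≠ some false := by simp
        rw [if_neg h1]
        rw [cnt_nil]
        have h2 : (true :: u₁ : List Bool) ≠ [] := by simp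
        rw [if_neg h2, zero_mul, add_zero]
        have hz : ∀ j ∈ Finset.range (bs'.length + 1),
            cnt (b :: bs'.take j) [] (true :: u₁) * cnt (bs'.drop j) v₂ w₂ = 0 := by
          intro j _
          rw [cnt_blocks_nil, if_neg hbu, zero_mul]
        rw [Finset.sum_congr rfl hz]
        simp
      | false :: u₁, hu, hbal0 =>
        exact absurd hbal0 (by have := low_false_head hu; omega)
  | b :: bs', x :: s' =>
    have hb : IsBlock b := hbs b List.mem_cons_self
    have hb0 : bal b = 0 := isBlock_bal hb
    have hbs' : ∀ c ∈ bs', IsBlock c := fun c hc => hbs c (List.mem_cons_of_mem _ hc)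
    rw [List.cons_append, cnt_cons, Finset.sum_range_succ']
    simp only [List.take_succ_cons, List.drop_succ_cons, List.take_zero, List.drop_zero,
      List.length_cons]
    simp only [block_prefix_iff hb hu0]
    have hsum : ∀ j ∈ Finset.range (bs'.length + 1),
        cnt (b :: bs'.take j) (x :: s') u * cnt (bs'.drop j) v₂ w₂ =
        (if b <+: u then cnt (bs'.take j) (x :: s') (u.drop b.length) else 0)
            * cnt (bs'.drop j) v₂ w₂
          + (if u.head? = some x then cnt (b :: bs'.take j) s' u.tail else 0)
            * cnt (bs'.drop j) v₂ w₂ := by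
      intro j _
      rw [cnt_cons, add_mul]
    rw [Finset.sum_congr rfl hsum, Finset.sum_add_distrib, add_assoc]
    congr 1
    -- A-part
    · by_cases hbu : b <+: u
      · obtain ⟨u', rfl⟩ := hbu
        have hdrop : ((b ++ u') ++ false :: w₂).drop b.length = u' ++ false :: w₂ := by
          rw [List.append_assoc, List.drop_left]
        have hdrop2 : (b ++ u').drop b.length = u' := List.drop_left
        have hn' : bs'.length + (x :: s').length < n := by
          simp at hn ⊢; omega
        have hIH := IH _ hn' bs' (x :: s') u' v₂ w₂ le_rfl
          hbs' hs (low_drop hb0 hu) (by simpa [hb0] using hbal)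
          (by simp only [bal_append, hb0, zero_add] at hu0; exact hu0)
        rw [if_pos (List.prefix_append b u'), hdrop, ← List.cons_append, hIH]
        apply Finset.sum_congr rfl
        intro j _
        rw [if_pos (List.prefix_append b u'), hdrop2]
      · rw [if_neg hbu]
        symm
        apply Finset.sum_eq_zero
        intro j _
        rw [if_neg hbu, zero_mul]
    -- B-part
    · match u, hu, hu0, hbal with
      | [], hu, hu0, hbal =>
        have hbal0 : bal (x :: s') = 0 := by simpa using hbal
        match x, hs, hbal0 with
        | true, hs, hbal0 =>
          have h1 : (([] : List Bool) ++ false :: w₂).head? ≠ some true := by simp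
          rw [if_neg h1, cnt_nil]
          have h2 : ([] : List Bool) ≠ true :: s' := by simp
          rw [if_neg h2, zero_mul, add_zero]
          symm
          apply Finset.sum_eq_zero
          intro j _
          have hh : (([] : List Bool)).head? ≠ some true := by simp
          rw [if_neg hh, zero_mul]
        | false, hs, hbal0 =>
          exact absurd hbal0 (by have := low_false_head hs; omega)
      | y :: u₁, hu, hu0, hbal =>
        by_cases hyx : y = x
        · subst hyx
          have hhead : ((y :: u₁) ++ false :: w₂).head? = some y := by simp
          have htail : ((y :: u₁) ++ false :: w₂).tail = u₁ ++ false :: w₂ := by simp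
          rw [List.cons_append] at hhead htail ⊢
          rw [if_pos hhead, htail]
          have hbal' : bal s' = bal u₁ := by
            simp only [bal_cons] at hbal; omega
          have hu₁0 : bal u₁ ≤ 0 := by
            match y, hu, hu0 with
            | true, hu, hu0 =>
              have h3 : bal (true :: u₁) = 1 + bal u₁ := by simp
              omega
            | false, hu, hu0 =>
              have h3 : bal (false :: u₁) = -1 + bal u₁ := by simp
              have h4 := low_false_head hu
              omega
          have hn' : (b :: bs').length + s'.length < n := by
            simp at hn ⊢; omega
          have hIH := IH _ hn' (b :: bs') s' u₁ v₂ w₂ le_rfl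
            hbs (low_cons hs) (low_cons hu) hbal' hu₁0
          rw [hIH, Finset.sum_range_succ']
          simp only [List.take_succ_cons, List.drop_succ_cons, List.take_zero,
            List.drop_zero, List.length_cons]
          congr 1
          · apply Finset.sum_congr rfl
            intro j _
            have hh : (y :: u₁).head? = some y := rfl
            rw [if_pos hh]
            rfl
          · rw [cnt_nil, cnt_nil]
            have hiff : (y :: u₁ = y :: s') ↔ (u₁ = s') := by simp
            by_cases h : u₁ = s'
            · rw [if_pos h, if_pos (hiff.2 h)]
            · rw [if_neg h, if_neg (fun hh => h (hiff.1 hh))]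
        · have hhead : ((y :: u₁) ++ false :: w₂).head? ≠ some x := by simp [hyx]
          rw [List.cons_append] at hhead ⊢
          rw [if_neg hhead, cnt_nil]
          have h2 : (y :: u₁) ≠ x :: s' := by simp [hyx]
          rw [if_neg h2, zero_mul, add_zero]
          symm
          apply Finset.sum_eq_zero
          intro j _
          have hh : (y :: u₁).head? ≠ some x := by simp [hyx]
          rw [if_neg hh, zero_mul]

/-! ### Parser correctness -/

lemma parse_go : ∀ l : List PTree, ∀ (rest : List Bool) (h : List PTree)
    (st : List (List PTree)),
    parseAux (wordF l ++ rest) (h :: st) = parseAux rest ((l.reverse ++ h) :: st) := by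
  refine forest_ind ?_ ?_
  · intro rest h st; simp [wordF]
  · intro m ts IHm IHts rest h st
    rw [wordF_cons, word_node]
    have e1 : (true :: (wordF m ++ [false]) ++ wordF ts) ++ rest
        = true :: (wordF m ++ (false :: (wordF ts ++ rest))) := by simp
    rw [e1, parseAux]
    have e2 := IHm (false :: (wordF ts ++ rest)) [] (h :: st)
    rw [e2, parseAux]
    have e3 := IHts rest (PTree.node (m.reverse ++ []).reverse :: h) st
    rw [e3]
    simp

lemma parseForest_wordF (l : List PTree) : parseForest (wordF l) = l := by
  have := parse_go l [] [] []
  rw [List.append_nil] at this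
  rw [parseForest, this, parseAux]
  simp

lemma wordF_injective : Function.Injective wordF := by
  intro a b h
  have := parseForest_wordF a
  rw [h, parseForest_wordF] at this
  exact this.symm

lemma parseTree_wordF (l : List PTree) : parseTree (wordF l) = PTree.node l := by
  rw [parseTree, parseForest_wordF]

lemma wordF_eq_nil {l : List PTree} : wordF l = [] ↔ l = [] := by
  cases l with
  | nil => simp [wordF]
  | cons t ts => simp [wordF_cons]

/-! ### Every shuffle of tree words is a tree word -/

/-- Merge pieces `ps` with blocks `bs` in alternation. -/
def mrg : List (List Bool) → List (List Bool) → List Bool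
  | ps, [] => ps.flatten
  | [], _ :: _ => []
  | p :: ps, b :: bs => p ++ b ++ mrg ps bs

lemma mrg_cons_append (q p : List Bool) (ps bs : List (List Bool)) :
    mrg ((q ++ p) :: ps) bs = q ++ mrg (p :: ps) bs := by
  cases bs with
  | nil => simp [mrg]
  | cons b bs => simp [mrg]

lemma shuffles_decomp : ∀ n (bs : List (List Bool)) (v w : List Bool),
    bs.length + v.length ≤ n → w ∈ shuffles bs v →
    ∃ ps, ps.length = bs.length + 1 ∧ ps.flatten = v ∧ w = mrg ps bs := by
  intro n
  induction n using Nat.strong_induction_on with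
  | _ n IH =>
  intro bs v w hn hw
  match bs, v with
  | [], v =>
    rw [shuffles] at hw
    simp at hw
    exact ⟨[v], by simp, by simp, by simp [mrg, hw]⟩
  | b :: bs', [] =>
    rw [shuffles] at hw
    rcases List.mem_map.1 hw with ⟨z, hz, rfl⟩
    have hn' : bs'.length + ([] : List Bool).length < n := by simp at hn ⊢; omega
    obtain ⟨ps', hlen, hfl, hz2⟩ := IH _ hn' bs' [] z le_rfl hz
    refine ⟨[] :: ps', by simp [hlen], by simpa using hfl, ?_⟩
    cases ps' with
    | nil => simp at hlen
    | cons p₀ ps'' => simp [mrg, hz2]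
  | b :: bs', x :: v' =>
    rw [shuffles] at hw
    rcases List.mem_append.1 hw with h | h
    · rcases List.mem_map.1 h with ⟨z, hz, rfl⟩
      have hn' : bs'.length + (x :: v').length < n := by simp at hn ⊢; omega
      obtain ⟨ps', hlen, hfl, hz2⟩ := IH _ hn' bs' (x :: v') z le_rfl hz
      refine ⟨[] :: ps', by simp [hlen], by simpa using hfl, ?_⟩
      cases ps' with
      | nil => simp at hlen
      | cons p₀ ps'' => simp [mrg, hz2]
    · rcases List.mem_map.1 h with ⟨z, hz, rfl⟩
      have hn' : (b :: bs').length + v'.length < n := by simp at hn ⊢; omega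
      obtain ⟨ps', hlen, hfl, hz2⟩ := IH _ hn' (b :: bs') v' z le_rfl hz
      cases ps' with
      | nil => simp at hlen
      | cons p₀ ps'' =>
        refine ⟨(x :: p₀) :: ps'', by simpa using hlen, by simpa using hfl, ?_⟩
        simp only [mrg, hz2]
        simp [mrg]

lemma insert_block : ∀ M : List PTree, ∀ (f : PTree) (a c : List Bool),
    wordF M = a ++ c → ∃ M', wordF M' = a ++ blk f ++ c := by
  refine forest_ind ?_ ?_
  · intro f a c h
    rw [wordF] at h
    simp only [List.map_nil, List.flatten_nil] at h
    obtain ⟨ha, hc⟩ := (List.append_eq_nil_iff).1 h.symm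
    subst ha; subst hc
    refine ⟨[f], ?_⟩
    rw [wordF_cons]
    simp [wordF, blk]
  · intro m ts IHm IHts f a c h
    rw [wordF_cons, word_node] at h
    cases a with
    | nil =>
      have hc : c = true :: (wordF m ++ [false]) ++ wordF ts := by simpa using h.symm
      subst hc
      refine ⟨f :: PTree.node m :: ts, ?_⟩
      rw [wordF_cons, wordF_cons, word_node]
      simp [blk]
    | cons x a' =>
      have hx : x = true := by
        have := congrArg (fun l => l.head?) h
        simpa using this.symm
      subst hx
      have h2 : wordF m ++ false :: wordF ts = a' ++ c := by
        have h3 : (wordF m ++ [false]) ++ wordF ts = a' ++ c := by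
          simpa using h
        simpa [List.append_assoc] using h3
      rcases List.append_eq_append_iff.1 h2 with ⟨e, he1, he2⟩ | ⟨e, he1, he2⟩
      · -- a' = wordF m ++ e, false :: wordF ts = e ++ c
        cases e with
        | nil =>
          simp only [List.nil_append] at he2
          obtain ⟨m', hm'⟩ := IHm f a' [] (by simp [he1])
          refine ⟨PTree.node m' :: ts, ?_⟩
          rw [wordF_cons, word_node, hm', ← he2]
          simp [blk, he1]
        | cons y e' =>
          have hy : y = false := by
            have := congrArg (fun l => l.head?) he2
            simpa using this
          subst hy
          have he2' : wordF ts = e' ++ c := by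
            simpa using he2
          obtain ⟨ts', hts'⟩ := IHts f e' c he2'
          refine ⟨PTree.node m :: ts', ?_⟩
          rw [wordF_cons, word_node, hts', he1]
          simp [blk]
      · -- wordF m = a' ++ e, c = e ++ false :: wordF ts
        obtain ⟨m', hm'⟩ := IHm f a' e he1
        refine ⟨PTree.node m' :: ts, ?_⟩
        rw [wordF_cons, word_node, hm', he2]
        simp [blk]

lemma mrg_range : ∀ (fs : List PTree) (ps : List (List Bool)) (M : List PTree),
    ps.length = fs.length + 1 → ps.flatten = wordF M →
    ∃ M', wordF M' = mrg ps (fs.map blk) := by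
  intro fs
  induction fs with
  | nil =>
    intro ps M hlen hfl
    exact ⟨M, by simp [mrg, hfl]⟩
  | cons f fs' IH =>
    intro ps M hlen hfl
    match ps with
    | p₀ :: p₁ :: ps'' =>
      have hlen' : ((p₀ ++ p₁) :: ps'').length = fs'.length + 1 := by
        simpa using hlen
      have hfl' : ((p₀ ++ p₁) :: ps'').flatten = wordF M := by
        simpa [List.append_assoc] using hfl
      obtain ⟨M₁, hM₁⟩ := IH ((p₀ ++ p₁) :: ps'') M hlen' hfl'
      rw [mrg_cons_append] at hM₁
      obtain ⟨M', hM'⟩ := insert_block M₁ f p₀ (mrg (p₁ :: ps'') (fs'.map blk)) hM₁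
      refine ⟨M', ?_⟩
      rw [hM']
      simp [mrg]
    | [p] => simp at hlen
    | [] => simp at hlen

lemma shuffle_is_word {F L : List PTree} {w : List Bool}
    (hw : w ∈ shuffles (F.map blk) (wordF L)) : ∃ M, w = wordF M := by
  obtain ⟨ps, hlen, hfl, rfl⟩ :=
    shuffles_decomp ((F.map blk).length + (wordF L).length) (F.map blk) (wordF L) _
      le_rfl hw
  obtain ⟨M', hM'⟩ := mrg_range F ps L (by simpa using hlen) hfl
  exact ⟨M', hM'.symm⟩

/-! ### Cut-side counting -/

lemma lsum_map_ite {α : Type*} (l : List α) (p : α → Bool) :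
    (l.map (fun a => if p a then (1:ℕ) else 0)).sum = l.countP p := by
  induction l with
  | nil => simp
  | cons a l ih =>
    rw [List.map_cons, List.sum_cons, List.countP_cons, ih]
    by_cases h : p a <;> simp [h] <;> omega

lemma lsum_map_add {α : Type*} (l : List α) (f g : α → ℕ) :
    (l.map (fun a => f a + g a)).sum = (l.map f).sum + (l.map g).sum := by
  induction l with
  | nil => simp
  | cons a l ih => simp [ih]; omega

lemma lsum_map_mul_right {α : Type*} (l : List α) (f : α → ℕ) (k : ℕ) :
    (l.map (fun a => f a * k)).sum = (l.map f).sum * k := by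
  induction l with
  | nil => simp
  | cons a l ih => simp [ih, add_mul]

lemma lsum_map_mul_left {α : Type*} (l : List α) (f : α → ℕ) (k : ℕ) :
    (l.map (fun a => k * f a)).sum = k * (l.map f).sum := by
  induction l with
  | nil => simp
  | cons a l ih => simp [ih, mul_add]

lemma lsum_map_swap {α β : Type*} (l : List α) (s : Finset β) (f : α → β → ℕ) :
    (l.map (fun a => ∑ i ∈ s, f a i)).sum = ∑ i ∈ s, (l.map (fun a => f a i)).sum := by
  induction l with
  | nil => simp
  | cons a l ih => simp [ih, Finset.sum_add_distrib]

lemma cutsOf_node (l : List PTree) :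
    PTree.cutsOf (PTree.node l) = (PTree.cutsOfList l).map Cut.node := by
  rw [PTree.cutsOf]

lemma cutsOfList_nil : PTree.cutsOfList [] = [[]] := by rw [PTree.cutsOfList]

lemma cutsOfList_cons (t : PTree) (ts : List PTree) :
    PTree.cutsOfList (t :: ts) = (PTree.cutsOf t).flatMap (fun c =>
      (PTree.cutsOfList ts).flatMap (fun cs => [(true, c) :: cs, (false, c) :: cs])) := by
  rw [PTree.cutsOfList]

lemma admissible_node (l : List (Bool × Cut)) :
    Cut.admissible (Cut.node l) = Cut.admissibleList l := by rw [Cut.admissible]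

lemma admissibleList_cons (b : Bool) (c : Cut) (cs : List (Bool × Cut)) :
    Cut.admissibleList ((b, c) :: cs)
      = ((if b then Cut.isEmpty c else Cut.admissible c) && Cut.admissibleList cs) := by
  rw [Cut.admissibleList]

lemma isEmpty_node (l : List (Bool × Cut)) :
    Cut.isEmpty (Cut.node l) = Cut.isEmptyList l := by rw [Cut.isEmpty]

lemma isEmptyList_cons (b : Bool) (c : Cut) (cs : List (Bool × Cut)) :
    Cut.isEmptyList ((b, c) :: cs) = (!b && Cut.isEmpty c && Cut.isEmptyList cs) := by
  rw [Cut.isEmptyList]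

lemma cutPieces_node (l : List PTree) (cs : List (Bool × Cut)) :
    PTree.cutPieces (PTree.node l) (Cut.node cs)
      = (PTree.node (PTree.cutPiecesList l cs).1, (PTree.cutPiecesList l cs).2) := by
  rw [PTree.cutPieces]

lemma cutPiecesList_nil (cs : List (Bool × Cut)) :
    PTree.cutPiecesList [] cs = ([], []) := by rw [PTree.cutPiecesList]

lemma cutPiecesList_cons (t : PTree) (ts : List PTree) (b : Bool) (c : Cut)
    (cs : List (Bool × Cut)) :
    PTree.cutPiecesList (t :: ts) ((b, c) :: cs) =
      if b then ((PTree.cutPiecesList ts cs).1,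
          ((PTree.cutPieces t c).1 :: (PTree.cutPieces t c).2) ++ (PTree.cutPiecesList ts cs).2)
        else ((PTree.cutPieces t c).1 :: (PTree.cutPiecesList ts cs).1,
          (PTree.cutPieces t c).2 ++ (PTree.cutPiecesList ts cs).2) := by
  rw [PTree.cutPiecesList]

lemma empty_pieces : ∀ l : List PTree, ∀ cs ∈ PTree.cutsOfList l,
    Cut.isEmptyList cs → PTree.cutPiecesList l cs = (l, []) := by
  refine forest_ind ?_ ?_
  · intro cs hcs _
    rw [cutsOfList_nil] at hcs
    simp at hcs
    subst hcs
    exact cutPiecesList_nil []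
  · intro m ts IHm IHts cs hcs hemp
    rw [cutsOfList_cons] at hcs
    rcases List.mem_flatMap.1 hcs with ⟨c, hc, hcs2⟩
    rcases List.mem_flatMap.1 hcs2 with ⟨cs', hcs', hmem⟩
    rw [cutsOf_node] at hc
    rcases List.mem_map.1 hc with ⟨cc, hcc, rfl⟩
    simp only [List.mem_cons, List.mem_singleton] at hmem
    rcases hmem with rfl | (rfl | h)
    · rw [isEmptyList_cons] at hemp; simp at hemp
    · rw [isEmptyList_cons] at hemp
      simp only [Bool.not_false, Bool.true_and, Bool.and_eq_true] at hemp
      obtain ⟨he1, he2⟩ := hemp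
      rw [isEmpty_node] at he1
      have hm := IHm cc hcc he1
      have hts := IHts cs' hcs' he2
      rw [cutPiecesList_cons, if_neg (by simp), cutPieces_node, hm, hts]
      simp
    · exact absurd h (by simp)

/-- There is exactly one empty decoration of a forest. -/
lemma countP_isEmptyList : ∀ l : List PTree,
    (PTree.cutsOfList l).countP Cut.isEmptyList = 1 := by
  refine forest_ind ?_ ?_
  · rw [cutsOfList_nil]
    simp [List.countP_cons, Cut.isEmptyList]
  · intro m ts IHm IHts
    rw [cutsOfList_cons, List.countP_flatMap, cutsOf_node, List.map_map]
    have hpt : ∀ cc ∈ PTree.cutsOfList m,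
        ((List.countP Cut.isEmptyList ∘ fun c => (PTree.cutsOfList ts).flatMap
          (fun cs => [(true, c) :: cs, (false, c) :: cs])) ∘ Cut.node) cc
        = if Cut.isEmptyList cc then 1 else 0 := by
      intro cc _
      simp only [Function.comp_apply, List.countP_flatMap, List.map_map]
      have hin : ∀ cs ∈ PTree.cutsOfList ts,
          (List.countP Cut.isEmptyList ∘ fun cs => [(true, Cut.node cc) :: cs,
            (false, Cut.node cc) :: cs]) cs
          = if (Cut.isEmpty (Cut.node cc) && Cut.isEmptyList cs) then 1 else 0 := by
        intro cs _
        simp only [Function.comp_apply, List.countP_cons, List.countP_nil,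
          isEmptyList_cons]
        simp
      rw [List.map_congr_left hin]
      by_cases he : Cut.isEmptyList cc
      · rw [if_pos he]
        have : ∀ cs ∈ PTree.cutsOfList ts,
            (if (Cut.isEmpty (Cut.node cc) && Cut.isEmptyList cs) then 1 else 0)
              = if Cut.isEmptyList cs then 1 else 0 := by
          intro cs _
          rw [isEmpty_node]
          simp [he]
        rw [List.map_congr_left this, lsum_map_ite]
        exact IHts
      · rw [if_neg he]
        have : ∀ cs ∈ PTree.cutsOfList ts,
            (if (Cut.isEmpty (Cut.node cc) && Cut.isEmptyList cs) then 1 else 0) = 0 := by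
          intro cs _
          rw [isEmpty_node]
          simp [he]
        rw [List.map_congr_left this]
        simp
    rw [List.map_congr_left hpt, lsum_map_ite]
    exact IHm

lemma cutPiecesList_cons_true (t : PTree) (ts : List PTree) (c : Cut)
    (cs : List (Bool × Cut)) :
    PTree.cutPiecesList (t :: ts) ((true, c) :: cs) =
      ((PTree.cutPiecesList ts cs).1,
        ((PTree.cutPieces t c).1 :: (PTree.cutPieces t c).2) ++ (PTree.cutPiecesList ts cs).2) := by
  rw [cutPiecesList_cons]; simp

lemma cutPiecesList_cons_false (t : PTree) (ts : List PTree) (c : Cut)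
    (cs : List (Bool × Cut)) :
    PTree.cutPiecesList (t :: ts) ((false, c) :: cs) =
      ((PTree.cutPieces t c).1 :: (PTree.cutPiecesList ts cs).1,
        (PTree.cutPieces t c).2 ++ (PTree.cutPiecesList ts cs).2) := by
  rw [cutPiecesList_cons]; simp

lemma admissibleList_cons_true (c : Cut) (cs : List (Bool × Cut)) :
    Cut.admissibleList ((true, c) :: cs) = (Cut.isEmpty c && Cut.admissibleList cs) := by
  rw [admissibleList_cons]; simp

lemma admissibleList_cons_false (c : Cut) (cs : List (Bool × Cut)) :
    Cut.admissibleList ((false, c) :: cs) = (Cut.admissible c && Cut.admissibleList cs) := by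
  rw [admissibleList_cons]; simp

/-- Number of admissible cuts of the forest `l` with pieces `(L, F)`. -/
noncomputable def NCF (l F L : List PTree) : ℕ :=
  (PTree.cutsOfList l).countP (fun cs => Cut.admissibleList cs
    && decide ((PTree.cutPiecesList l cs).2 = F)
    && decide ((PTree.cutPiecesList l cs).1 = L))

lemma NCF_eq_sum (l F L : List PTree) :
    NCF l F L = ((PTree.cutsOfList l).map (fun cs =>
      if (Cut.admissibleList cs = true ∧ (PTree.cutPiecesList l cs).2 = F
          ∧ (PTree.cutPiecesList l cs).1 = L) then (1:ℕ) else 0)).sum := by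
  rw [NCF, ← lsum_map_ite]
  apply congrArg List.sum
  apply List.map_congr_left
  intro cs _
  apply if_congr _ rfl rfl
  simp [Bool.and_eq_true, decide_eq_true_eq, and_assoc]

lemma NCF_nil (F L : List PTree) :
    NCF [] F L = if F = [] ∧ L = [] then 1 else 0 := by
  rw [NCF_eq_sum, cutsOfList_nil]
  simp only [List.map_cons, List.map_nil, List.sum_cons, List.sum_nil, add_zero,
    cutPiecesList_nil]
  apply if_congr _ rfl rfl
  constructor
  · rintro ⟨_, h2, h3⟩; exact ⟨h2.symm, h3.symm⟩
  · rintro ⟨h2, h3⟩; exact ⟨by rw [Cut.admissibleList], h2.symm, h3.symm⟩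

lemma mul_ind (p q : Prop) [Decidable p] [Decidable q] :
    (if p then (1:ℕ) else 0) * (if q then 1 else 0) = if p ∧ q then 1 else 0 := by
  by_cases hp : p <;> by_cases hq : q <;> simp [hp, hq]

lemma indicator_split (A B F : List PTree) :
    (if A ++ B = F then (1:ℕ) else 0)
      = ∑ i ∈ Finset.range (F.length + 1), if A = F.take i ∧ B = F.drop i then 1 else 0 := by
  by_cases h : A ++ B = F
  · rw [if_pos h]
    subst h
    rw [Finset.sum_eq_single A.length]
    · rw [if_pos ⟨(List.take_left : (A ++ B).take A.length = A).symm, (List.drop_left : (A ++ B).drop A.length = B).symm⟩]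
    · intro i hi hne
      rw [if_neg]
      rintro ⟨h1, h2⟩
      apply hne
      have hlen := congrArg List.length h1
      simp only [List.length_take, List.length_append] at hlen
      simp only [Finset.mem_range, List.length_append] at hi
      omega
    · intro h0
      exact absurd (Finset.mem_range.2 (by simp)) h0
  · rw [if_neg h]
    symm
    apply Finset.sum_eq_zero
    intro i hi
    rw [if_neg]
    rintro ⟨h1, h2⟩
    exact h (by rw [h1, h2]; exact List.take_append_drop i F)

lemma indicator_split' (C : Prop) [Decidable C] (A B F : List PTree) :
    (if C ∧ A ++ B = F then (1:ℕ) else 0)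
      = ∑ i ∈ Finset.range (F.length + 1),
          if C ∧ A = F.take i ∧ B = F.drop i then 1 else 0 := by
  by_cases hC : C
  · simp only [hC, true_and]
    exact indicator_split A B F
  · simp [hC]

/-- Pointwise value of the `(true, c)` summand. -/
lemma T_point (m ts F L : List PTree) (cc : List (Bool × Cut))
    (hcc : cc ∈ PTree.cutsOfList m) (cs : List (Bool × Cut)) :
    (if (Cut.admissibleList ((true, Cut.node cc) :: cs)
        && decide ((PTree.cutPiecesList (PTree.node m :: ts) ((true, Cut.node cc) :: cs)).2 = F)
        && decide ((PTree.cutPiecesList (PTree.node m :: ts) ((true, Cut.node cc) :: cs)).1 = L))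
        = true then (1:ℕ) else 0)
    = (if Cut.isEmptyList cc = true then 1 else 0)
        * (if (Cut.admissibleList cs = true
            ∧ PTree.node m :: (PTree.cutPiecesList ts cs).2 = F
            ∧ (PTree.cutPiecesList ts cs).1 = L) then 1 else 0) := by
  rw [cutPiecesList_cons_true, admissibleList_cons_true, isEmpty_node]
  by_cases he : Cut.isEmptyList cc
  · have hp : PTree.cutPiecesList m cc = (m, []) := empty_pieces m cc hcc he
    rw [cutPieces_node, hp, if_pos he, one_mul]
    apply if_congr _ rfl rfl
    simp only [he, Bool.true_and, Bool.and_eq_true, decide_eq_true_eq]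
    constructor
    · rintro ⟨⟨h1, h2⟩, h3⟩
      refine ⟨h1, by simpa using h2, h3⟩
    · rintro ⟨h1, h2, h3⟩
      exact ⟨⟨h1, by simpa using h2⟩, h3⟩
  · rw [if_neg he, zero_mul, if_neg]
    simp [he]

/-- Pointwise value of the `(false, c)` summand when `L = []`. -/
lemma F_point_nil (m ts F : List PTree) (cc : List (Bool × Cut)) (cs : List (Bool × Cut)) :
    (if (Cut.admissibleList ((false, Cut.node cc) :: cs)
        && decide ((PTree.cutPiecesList (PTree.node m :: ts) ((false, Cut.node cc) :: cs)).2 = F)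
        && decide ((PTree.cutPiecesList (PTree.node m :: ts) ((false, Cut.node cc) :: cs)).1
            = ([] : List PTree)))
        = true then (1:ℕ) else 0) = 0 := by
  rw [cutPiecesList_cons_false]
  apply if_neg
  simp

/-- Pointwise value of the `(false, c)` summand when `L = node r' :: Lr`. -/
lemma F_point_cons (m ts F r' Lr : List PTree) (cc : List (Bool × Cut))
    (cs : List (Bool × Cut)) :
    (if (Cut.admissibleList ((false, Cut.node cc) :: cs)
        && decide ((PTree.cutPiecesList (PTree.node m :: ts) ((false, Cut.node cc) :: cs)).2 = F)
        && decide ((PTree.cutPiecesList (PTree.node m :: ts) ((false, Cut.node cc) :: cs)).1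
            = PTree.node r' :: Lr))
        = true then (1:ℕ) else 0)
    = ∑ i ∈ Finset.range (F.length + 1),
        (if (Cut.admissibleList cc = true ∧ (PTree.cutPiecesList m cc).2 = F.take i
            ∧ (PTree.cutPiecesList m cc).1 = r') then (1:ℕ) else 0)
        * (if (Cut.admissibleList cs = true ∧ (PTree.cutPiecesList ts cs).2 = F.drop i
            ∧ (PTree.cutPiecesList ts cs).1 = Lr) then 1 else 0) := by
  rw [cutPiecesList_cons_false, admissibleList_cons_false, admissible_node,
    cutPieces_node]
  have step1 : (if (Cut.admissibleList cc && Cut.admissibleList cs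
        && decide ((PTree.cutPiecesList m cc).2 ++ (PTree.cutPiecesList ts cs).2 = F)
        && decide (PTree.node (PTree.cutPiecesList m cc).1 :: (PTree.cutPiecesList ts cs).1
            = PTree.node r' :: Lr))
        = true then (1:ℕ) else 0)
      = if ((Cut.admissibleList cc = true ∧ (PTree.cutPiecesList m cc).1 = r'
            ∧ Cut.admissibleList cs = true ∧ (PTree.cutPiecesList ts cs).1 = Lr)
          ∧ (PTree.cutPiecesList m cc).2 ++ (PTree.cutPiecesList ts cs).2 = F)
          then (1:ℕ) else 0 := by
    apply if_congr _ rfl rfl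
    simp only [Bool.and_eq_true, decide_eq_true_eq, List.cons.injEq, PTree.node.injEq]
    tauto
  rw [step1, indicator_split']
  apply Finset.sum_congr rfl
  intro i _
  rw [mul_ind]
  apply if_congr _ rfl rfl
  tauto

/-- The contribution of cuts whose first edge is cut. -/
noncomputable def tTerm (m ts L : List PTree) : List PTree → ℕ
  | [] => 0
  | f :: F₂ => if f = PTree.node m then NCF ts F₂ L else 0

/-- The contribution of cuts whose first edge is not cut. -/
noncomputable def fTerm (m ts F : List PTree) : List PTree → ℕ
  | [] => 0
  | PTree.node r' :: Lr =>
      ∑ i ∈ Finset.range (F.length + 1), NCF m (F.take i) r' * NCF ts (F.drop i) Lr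

lemma NCF_cons (m ts F L : List PTree) :
    NCF (PTree.node m :: ts) F L = tTerm m ts L F + fTerm m ts F L := by
  rw [NCF, cutsOfList_cons, List.countP_flatMap, cutsOf_node, List.map_map]
  -- the inner function applied to each cc
  have hpt : ∀ cc ∈ PTree.cutsOfList m,
      ((List.countP (fun cs => Cut.admissibleList cs
          && decide ((PTree.cutPiecesList (PTree.node m :: ts) cs).2 = F)
          && decide ((PTree.cutPiecesList (PTree.node m :: ts) cs).1 = L))
        ∘ fun c => (PTree.cutsOfList ts).flatMap
        (fun cs => [(true, c) :: cs, (false, c) :: cs])) ∘ Cut.node) cc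
      = ((PTree.cutsOfList ts).map (fun cs =>
          (if Cut.isEmptyList cc = true then 1 else 0)
            * (if (Cut.admissibleList cs = true
                ∧ PTree.node m :: (PTree.cutPiecesList ts cs).2 = F
                ∧ (PTree.cutPiecesList ts cs).1 = L) then 1 else 0))).sum
        + ((PTree.cutsOfList ts).map (fun cs =>
            (if (Cut.admissibleList ((false, Cut.node cc) :: cs)
              && decide ((PTree.cutPiecesList (PTree.node m :: ts)
                  ((false, Cut.node cc) :: cs)).2 = F)
              && decide ((PTree.cutPiecesList (PTree.node m :: ts)
                  ((false, Cut.node cc) :: cs)).1 = L)) = true then (1:ℕ) else 0))).sum := by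
    intro cc hcc
    simp only [Function.comp_apply, List.countP_flatMap, List.map_map]
    rw [← lsum_map_add]
    apply congrArg List.sum
    apply List.map_congr_left
    intro cs hcs
    simp only [Function.comp_apply, List.countP_cons, List.countP_nil, zero_add]
    rw [← T_point m ts F L cc hcc cs]
    omega
  rw [List.map_congr_left hpt, lsum_map_add]
  congr 1
  -- T part
  · have hc : ∀ cc ∈ PTree.cutsOfList m,
        ((PTree.cutsOfList ts).map (fun cs =>
          (if Cut.isEmptyList cc = true then 1 else 0)
            * (if (Cut.admissibleList cs = true
                ∧ PTree.node m :: (PTree.cutPiecesList ts cs).2 = F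
                ∧ (PTree.cutPiecesList ts cs).1 = L) then (1:ℕ) else 0))).sum
        = (if Cut.isEmptyList cc = true then 1 else 0)
            * ((PTree.cutsOfList ts).map (fun cs =>
              (if (Cut.admissibleList cs = true
                ∧ PTree.node m :: (PTree.cutPiecesList ts cs).2 = F
                ∧ (PTree.cutPiecesList ts cs).1 = L) then (1:ℕ) else 0))).sum := by
      intro cc _
      rw [lsum_map_mul_left]
    rw [List.map_congr_left hc, lsum_map_mul_right, lsum_map_ite, countP_isEmptyList,
      one_mul]
    match F with
    | [] =>
      rw [tTerm]
      symm
      have : ∀ cs ∈ PTree.cutsOfList ts,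
          (if (Cut.admissibleList cs = true
            ∧ PTree.node m :: (PTree.cutPiecesList ts cs).2 = ([] : List PTree)
            ∧ (PTree.cutPiecesList ts cs).1 = L) then (1:ℕ) else 0) = 0 := by
        intro cs _
        rw [if_neg]
        rintro ⟨_, h2, _⟩
        simp at h2
      rw [List.map_congr_left this]
      simp
    | f :: F₂ =>
      rw [tTerm]
      by_cases hf : f = PTree.node m
      · subst hf
        rw [if_pos (rfl : PTree.node m = PTree.node m), NCF_eq_sum]
        apply congrArg List.sum
        apply List.map_congr_left
        intro cs _
        apply if_congr _ rfl rfl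
        constructor
        · rintro ⟨h1, h2, h3⟩
          exact ⟨h1, by simpa using h2, h3⟩
        · rintro ⟨h1, h2, h3⟩
          exact ⟨h1, by simp [h2], h3⟩
      · rw [if_neg hf]
        have : ∀ cs ∈ PTree.cutsOfList ts,
            (if (Cut.admissibleList cs = true
              ∧ PTree.node m :: (PTree.cutPiecesList ts cs).2 = f :: F₂
              ∧ (PTree.cutPiecesList ts cs).1 = L) then (1:ℕ) else 0) = 0 := by
          intro cs _
          rw [if_neg]
          rintro ⟨_, h2, _⟩
          injection h2 with ha hb
          exact hf ha.symm
        rw [List.map_congr_left this]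
        simp
  -- F part
  · match L with
    | [] =>
      rw [fTerm]
      have : ∀ cc ∈ PTree.cutsOfList m,
          ((PTree.cutsOfList ts).map (fun cs =>
            (if (Cut.admissibleList ((false, Cut.node cc) :: cs)
              && decide ((PTree.cutPiecesList (PTree.node m :: ts)
                  ((false, Cut.node cc) :: cs)).2 = F)
              && decide ((PTree.cutPiecesList (PTree.node m :: ts)
                  ((false, Cut.node cc) :: cs)).1 = ([] : List PTree)))
              = true then (1:ℕ) else 0))).sum = 0 := by
        intro cc _
        have h2 : ∀ cs ∈ PTree.cutsOfList ts, (if (Cut.admissibleList ((false, Cut.node cc) :: cs)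
              && decide ((PTree.cutPiecesList (PTree.node m :: ts)
                  ((false, Cut.node cc) :: cs)).2 = F)
              && decide ((PTree.cutPiecesList (PTree.node m :: ts)
                  ((false, Cut.node cc) :: cs)).1 = ([] : List PTree)))
              = true then (1:ℕ) else 0) = 0 := fun cs _ => F_point_nil m ts F cc cs
        rw [List.map_congr_left h2]
        simp
      rw [List.map_congr_left this]
      simp
    | PTree.node r' :: Lr =>
      rw [fTerm]
      have hF : ∀ cc ∈ PTree.cutsOfList m,
          ((PTree.cutsOfList ts).map (fun cs =>
            (if (Cut.admissibleList ((false, Cut.node cc) :: cs)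
              && decide ((PTree.cutPiecesList (PTree.node m :: ts)
                  ((false, Cut.node cc) :: cs)).2 = F)
              && decide ((PTree.cutPiecesList (PTree.node m :: ts)
                  ((false, Cut.node cc) :: cs)).1 = PTree.node r' :: Lr))
              = true then (1:ℕ) else 0))).sum
          = ∑ i ∈ Finset.range (F.length + 1),
              (if (Cut.admissibleList cc = true ∧ (PTree.cutPiecesList m cc).2 = F.take i
                  ∧ (PTree.cutPiecesList m cc).1 = r') then (1:ℕ) else 0)
                * ((PTree.cutsOfList ts).map (fun cs =>
                    (if (Cut.admissibleList cs = true
                      ∧ (PTree.cutPiecesList ts cs).2 = F.drop i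
                      ∧ (PTree.cutPiecesList ts cs).1 = Lr) then (1:ℕ) else 0))).sum := by
        intro cc _
        have h2 := fun (cs : List (Bool × Cut)) (_ : cs ∈ PTree.cutsOfList ts) =>
          F_point_cons m ts F r' Lr cc cs
        rw [List.map_congr_left h2, lsum_map_swap]
        apply Finset.sum_congr rfl
        intro i _
        rw [lsum_map_mul_left]
      rw [List.map_congr_left hF, lsum_map_swap]
      apply Finset.sum_congr rfl
      intro i _
      rw [lsum_map_mul_right, NCF_eq_sum, NCF_eq_sum]

lemma low_wordF (l : List PTree) : Low (wordF l) :=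
  low_of_pos_bal (pos_wordF l) (bal_wordF l)

lemma blk_prefix_top (f : PTree) (m : List PTree) (w₂ : List Bool) :
    blk f <+: true :: (wordF m ++ false :: w₂) ↔ f = PTree.node m := by
  cases f with
  | node fc =>
    rw [blk, word_node, List.cons_prefix_cons]
    simp only [true_and]
    constructor
    · rintro ⟨t, ht⟩
      rw [List.append_assoc, List.singleton_append] at ht
      obtain ⟨e1, _⟩ := sep_unique (low_wordF fc) (low_wordF m)
        (by rw [bal_wordF, bal_wordF]) ht
      rw [wordF_injective e1]
    · rintro h
      injection h with h
      subst h
      exact ⟨w₂, by simp⟩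

lemma blk_ne_nil (f : PTree) : blk f ≠ [] := by rw [blk]; simp

lemma wordF_cons' (t : PTree) (ts : List PTree) :
    wordF (t :: ts) = blk t ++ wordF ts := rfl

/-- The key identity: shuffle count equals cut count. -/
lemma main_count : ∀ l' : List PTree, ∀ F L : List PTree,
    cnt (F.map blk) (wordF L) (wordF l') = NCF l' F L := by
  refine forest_ind ?_ ?_
  · intro F L
    rw [NCF_nil]
    cases F with
    | nil =>
      rw [List.map_nil, cnt_nil]
      by_cases hL : L = []
      · subst hL; simp
      · have h1 : ¬ (wordF ([] : List PTree) = wordF L) := by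
          intro h
          exact hL (wordF_injective h).symm
        rw [if_neg h1, if_neg (by simp [hL])]
    | cons f F₂ =>
      rw [List.map_cons]
      rw [show wordF ([] : List PTree) = [] from rfl, cnt_nil_target _ _ _ (blk_ne_nil f)]
      rw [if_neg (by simp)]
  · intro m ts IHm IHts F L
    have hw : wordF (PTree.node m :: ts) = true :: (wordF m ++ false :: wordF ts) := by
      rw [wordF_cons, word_node]
      simp
    rw [NCF_cons]
    cases L with
    | nil =>
      rw [fTerm, add_zero]
      cases F with
      | nil =>
        rw [tTerm, List.map_nil, cnt_nil, if_neg]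
        rw [hw, show wordF ([] : List PTree) = [] from rfl]
        simp
      | cons f F₂ =>
        rw [tTerm, List.map_cons, show wordF ([] : List PTree) = [] from rfl,
          cnt_blocks_nil]
        rw [hw]
        simp only [blk_prefix_top]
        by_cases hf : f = PTree.node m
        · subst hf
          rw [if_pos rfl, if_pos rfl]
          rw [← hw, wordF_cons', show blk (PTree.node m) = blk (PTree.node m) from rfl]
          rw [List.drop_left]
          exact IHts F₂ []
        · rw [if_neg hf, if_neg hf]
    | cons r Lr =>
      cases r with
      | node r' =>
        have hv : wordF (PTree.node r' :: Lr) = true :: (wordF r' ++ false :: wordF Lr) := by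
          rw [wordF_cons, word_node]
          simp
        rw [fTerm]
        cases F with
        | nil =>
          rw [tTerm, zero_add, List.length_nil, Finset.sum_range_one]
          simp only [List.take_nil, List.drop_nil]
          rw [← IHm [] r', ← IHts [] Lr]
          rw [List.map_nil, cnt_nil, cnt_nil, cnt_nil, hv, hw]
          by_cases h : true :: (wordF m ++ false :: wordF ts)
              = true :: (wordF r' ++ false :: wordF Lr)
          · have h2 : wordF m ++ false :: wordF ts = wordF r' ++ false :: wordF Lr := by
              injection h
            obtain ⟨e1, e2⟩ := sep_unique (low_wordF m) (low_wordF r')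
              (by rw [bal_wordF, bal_wordF]) h2
            rw [if_pos h, if_pos e1, if_pos e2]
          · rw [if_neg h]
            by_cases h1 : wordF m = wordF r'
            · by_cases h2 : wordF ts = wordF Lr
              · exact absurd (by rw [h1, h2]) h
              · rw [if_pos h1, if_neg h2]
            · rw [if_neg h1]
              simp
        | cons f F₂ =>
          rw [tTerm, List.map_cons, hw, hv, cnt_cons]
          congr 1
          · -- block-first part
            simp only [blk_prefix_top]
            by_cases hf : f = PTree.node m
            · subst hf
              rw [if_pos rfl, if_pos rfl]
              rw [← hw, ← hv,
                show wordF (PTree.node m :: ts) = blk (PTree.node m) ++ wordF ts from rfl,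
                List.drop_left]
              exact IHts F₂ (PTree.node r' :: Lr)
            · rw [if_neg hf, if_neg hf]
          · -- shuffle-into-first-component part
            have hh : (true :: (wordF m ++ false :: wordF ts)).head? = some true := rfl
            rw [if_pos hh, List.tail_cons]
            have hsplit := split_main
              (((f :: F₂).map blk).length + (wordF r').length)
              ((f :: F₂).map blk) (wordF r') (wordF m) (wordF Lr) (wordF ts)
              le_rfl
              (by intro b hb; rcases List.mem_map.1 hb with ⟨t, _, rfl⟩; exact isBlock_blk t)
              (low_wordF r') (low_wordF m)
              (by rw [bal_wordF, bal_wordF])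
              (by rw [bal_wordF])
            rw [List.map_cons] at hsplit
            rw [hsplit]
            simp only [← List.map_cons, List.length_map, ← List.map_take, ← List.map_drop]
            apply Finset.sum_congr rfl
            intro i _
            rw [IHm (List.take i (f :: F₂)) r', IHts (List.drop i (f :: F₂)) Lr]

lemma finsupp_sum_apply_single (k : Type*) [Semiring k] (T' : PTree) :
    ∀ L : List (List Bool),
      (((L.map (fun w => Finsupp.single (parseTree w) (1:k))).sum) T')
        = ((L.countP (fun w => decide (parseTree w = T'))) : k) := by
  intro L
  induction L with
  | nil => simp
  | cons a L ih =>
    simp only [List.map_cons, List.sum_cons, Finsupp.add_apply, ih, List.countP_cons]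
    rw [Finsupp.single_apply]
    by_cases h : parseTree a = T'
    · simp [h, add_comm]
    · simp [h]

end Aux

/-- Theorem 4 of the paper, key identity.  For planar rooted
trees `T, T'` and an ordered forest `F`, the coefficient of `T'` in
`B₊(F) ∘ T` equals the number of admissible cuts `c` of `T'` such that
`P^c(T') = F` (as an ordered forest) and `R^c(T') = T`.  (This is the identity
from which it follows that `(kP, ∘, Δ)` is dual to the Foissy Hopf algebra
`H_F` via the pairing `(T,T') = δ_{T,T'}`.) -/
theorem planar_gl_coefficient_eq_cut_count (k : Type*) [Field k] [CharZero k]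
    (F : List PTree) (T T' : PTree) :
    (pMul k (PTree.node F) T) T'
      = (((PTree.cutsOf T').filter (fun c =>
            Cut.admissible c && decide (PTree.Pcut T' c = F)
              && decide (PTree.Rcut T' c = T))).length : k) := by
  cases T with
  | node LT =>
    cases T' with
    | node l' =>
      -- left side
      rw [pMul, finsupp_sum_apply_single]
      rw [blocks_node, word_node]
      -- right side
      rw [← List.countP_eq_length_filter, cutsOf_node, List.countP_map]
      have hR : (PTree.cutsOfList l').countP ((fun c =>
            Cut.admissible c && decide (PTree.Pcut (PTree.node l') c = F)
              && decide (PTree.Rcut (PTree.node l') c = PTree.node LT)) ∘ Cut.node)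
          = NCF l' F LT := by
        rw [NCF]
        apply List.countP_congr
        intro cs _
        simp only [Function.comp_apply, admissible_node, PTree.Pcut, PTree.Rcut,
          cutPieces_node]
        simp [Bool.and_eq_true, decide_eq_true_eq, PTree.node.injEq]
      rw [hR, ← main_count l' F LT]
      have hL : (shuffles (F.map blk) (wordF LT)).countP
            (fun w => decide (parseTree w = PTree.node l'))
          = cnt (F.map blk) (wordF LT) (wordF l') := by
        rw [cnt, List.count_eq_countP]
        apply List.countP_congr
        intro w hw
        obtain ⟨M, rfl⟩ := shuffle_is_word hw
        rw [parseTree_wordF]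
        by_cases h : M = l'
        · subst h; simp
        · have h2 : ¬ (wordF M = wordF l') := fun hh => h (wordF_injective hh)
          have h3 : ¬ (PTree.node M = PTree.node l') := by
            intro hh; injection hh with hh; exact h hh
          simp [h2, h3]
      rw [hL]
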